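/- Let n, k, ℓ be positive integers with k ≤ ℓ and 2ℓ ≤ n. Let C be an n×n real matrix with rank(C) ≤ k. Let M be the ℓ×ℓ top-right submatrix M_{rc} = C_{r, n−ℓ+c} (1 ≤ r, c ≤ ℓ), suppose rank(M) = k, and let G be any ℓ×ℓ real matrix with M G M = M. Then for all indices i, j with 1 ≤ i ≤ n−ℓ and ℓ < j ≤ n, C_{ij} = Σ_{c=1}^{ℓ} Σ_{r=1}^{ℓ} C_{i, n−ℓ+c} · G_{cr} · C_{r, j}. In particular, every such entry of C is recovered, via the Nyström formula, from entries of C lying in its strict upper triangle. -/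

import Mathlib

open Finset Submodule Matrix


/-- Constructive (Nyström) form of Proposition 1: a rank-≤k matrix `C` whose
ℓ×ℓ top-right corner `M` has rank `k` satisfies, for every entry outside the
first ℓ columns and the last ℓ rows (1-based: 1 ≤ i ≤ n-ℓ and ℓ < j ≤ n),
`C i j = Σ_c Σ_r C_{i, n-ℓ+c} G_{cr} C_{r, j}` for any generalized inverse `G`
of `M`.  All entries on the right-hand side lie in the strict upper triangle. -/
theorem nystrom_reconstruction (n k ℓ : ℕ) (hn : 0 < n) (hk : 0 < k)
    (hℓ : 0 < ℓ) (hkℓ : k ≤ ℓ) (hℓn : 2 * ℓ ≤ n)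
    (C : Matrix (Fin n) (Fin n) ℝ) (hC : C.rank ≤ k)
    (M : Matrix (Fin ℓ) (Fin ℓ) ℝ)
    (hM : ∀ r c : Fin ℓ,
      M r c = C ⟨r.val, lt_of_lt_of_le r.isLt (by omega)⟩
                ⟨n - ℓ + c.val, by have := c.isLt; omega⟩)
    (hrank : M.rank = k)
    (G : Matrix (Fin ℓ) (Fin ℓ) ℝ) (hG : M * G * M = M) :
    ∀ i j : Fin n, i.val < n - ℓ → ℓ ≤ j.val →
      C i j = ∑ c : Fin ℓ, ∑ r : Fin ℓ,
        C i ⟨n - ℓ + c.val, by have := c.isLt; omega⟩ * G c r *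
          C ⟨r.val, lt_of_lt_of_le r.isLt (by omega)⟩ j := by
  intro i j hi hj
  have hℓn' : ℓ ≤ n := by omega
  set f : Fin ℓ → Fin n := fun r => ⟨r.val, by omega⟩ with hf
  set g : Fin ℓ → Fin n := fun c => ⟨n - ℓ + c.val, by have := c.isLt; omega⟩ with hg
  set A : Matrix (Fin ℓ) (Fin n) ℝ := C.submatrix f id with hA
  set B : Matrix (Fin n) (Fin ℓ) ℝ := C.submatrix id g with hB
  have hMC : ∀ r c, M r c = C (f r) (g c) := fun r c => hM r c
  have hcolsMA : Set.range Mᵀ ⊆ Set.range Aᵀ := by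
    rintro _ ⟨c, rfl⟩
    exact ⟨g c, by funext r; exact (hMC r c).symm⟩
  have hrowsAC : Set.range A ⊆ Set.range C := by
    rintro _ ⟨r, rfl⟩; exact ⟨f r, rfl⟩
  have hrowsMB : Set.range M ⊆ Set.range B := by
    rintro _ ⟨r, rfl⟩
    exact ⟨f r, by funext c; exact (hMC r c).symm⟩
  have hcolsBC : Set.range Bᵀ ⊆ Set.range Cᵀ := by
    rintro _ ⟨c, rfl⟩; exact ⟨g c, rfl⟩
  have hCrow : Module.finrank ℝ (span ℝ (Set.range C)) ≤ k := by
    exact (Matrix.rank_eq_finrank_span_row C).symm.trans_le hC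
  have hCcol : Module.finrank ℝ (span ℝ (Set.range Cᵀ)) ≤ k := by
    exact (Matrix.rank_eq_finrank_span_cols C).symm.trans_le hC
  have hrankA : A.rank = k := by
    refine le_antisymm ?_ ?_
    · rw [Matrix.rank_eq_finrank_span_row]
      exact le_trans (Submodule.finrank_mono (span_mono hrowsAC)) hCrow
    · rw [← hrank, Matrix.rank_eq_finrank_span_cols, Matrix.rank_eq_finrank_span_cols]
      exact Submodule.finrank_mono (span_mono hcolsMA)
  have hrankB : B.rank = k := by
    refine le_antisymm ?_ ?_
    · rw [Matrix.rank_eq_finrank_span_cols]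
      exact le_trans (Submodule.finrank_mono (span_mono hcolsBC)) hCcol
    · rw [← hrank, Matrix.rank_eq_finrank_span_row, Matrix.rank_eq_finrank_span_row]
      exact Submodule.finrank_mono (span_mono hrowsMB)
  have hspanrow : span ℝ (Set.range A) = span ℝ (Set.range C) := by
    apply Submodule.eq_of_le_of_finrank_le (span_mono hrowsAC)
    rw [show Module.finrank ℝ (span ℝ (Set.range A)) = k from by
      exact (Matrix.rank_eq_finrank_span_row A).symm.trans hrankA]
    exact hCrow
  have hspancol : span ℝ (Set.range Bᵀ) = span ℝ (Set.range Cᵀ) := by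
    apply Submodule.eq_of_le_of_finrank_le (span_mono hcolsBC)
    rw [show Module.finrank ℝ (span ℝ (Set.range Bᵀ)) = k from by
      exact (Matrix.rank_eq_finrank_span_cols B).symm.trans hrankB]
    exact hCcol
  obtain ⟨x, hx⟩ := (mem_span_range_iff_exists_fun ℝ).mp
    (hspanrow ▸ subset_span (Set.mem_range_self i) : C i ∈ span ℝ (Set.range A))
  obtain ⟨y, hy⟩ := (mem_span_range_iff_exists_fun ℝ).mp
    (hspancol ▸ subset_span (Set.mem_range_self j) : Cᵀ j ∈ span ℝ (Set.range Bᵀ))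
  have hx' : ∀ j', C i j' = ∑ a, x a * C (f a) j' := by
    intro j'
    have := congrFun hx j'
    simpa [Finset.sum_apply, A, Matrix.submatrix] using this.symm
  have hy' : ∀ i', C i' j = ∑ b, y b * C i' (g b) := by
    intro i'
    have := congrFun hy i'
    simpa [Finset.sum_apply, B, Matrix.transpose, Matrix.submatrix] using this.symm
  have hCg : ∀ c, C i (g c) = ∑ a, x a * M a c := by
    intro c; rw [hx' (g c)]
    exact Finset.sum_congr rfl fun a _ => by rw [hMC]
  have hCf : ∀ r, C (f r) j = ∑ b, y b * M r b := by
    intro r; rw [hy' (f r)]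
    exact Finset.sum_congr rfl fun b _ => by rw [hMC]
  calc C i j = ∑ b, y b * C i (g b) := hy' i
    _ = ∑ b, y b * ∑ a, x a * M a b := Finset.sum_congr rfl fun b _ => by rw [hCg]
    _ = x ⬝ᵥ M *ᵥ y := by
        rw [dotProduct]
        simp only [Matrix.mulVec, dotProduct, Finset.mul_sum]
        rw [Finset.sum_comm]
        exact Finset.sum_congr rfl fun a _ => Finset.sum_congr rfl fun b _ => by ring
    _ = x ⬝ᵥ (M * G * M) *ᵥ y := by rw [hG]
    _ = (x ᵥ* M) ⬝ᵥ (G *ᵥ (M *ᵥ y)) := by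
        rw [Matrix.dotProduct_mulVec, Matrix.dotProduct_mulVec, Matrix.dotProduct_mulVec,
          ← Matrix.vecMul_vecMul, ← Matrix.vecMul_vecMul]
    _ = ∑ c, ∑ r, (∑ a, x a * M a c) * G c r * (∑ b, y b * M r b) := by
        refine Finset.sum_congr rfl fun c _ => ?_
        rw [Matrix.mulVec, dotProduct, Finset.mul_sum]
        refine Finset.sum_congr rfl fun r _ => ?_
        have h1 : (x ᵥ* M) c = ∑ a, x a * M a c := rfl
        have h2 : (M *ᵥ y) r = ∑ b, M r b * y b := rfl
        rw [h1, h2]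
        rw [show (∑ b, M r b * y b) = ∑ b, y b * M r b from
          Finset.sum_congr rfl fun b _ => mul_comm _ _]
        ring
    _ = ∑ c, ∑ r, C i (g c) * G c r * C (f r) j := by
        refine Finset.sum_congr rfl fun c _ => Finset.sum_congr rfl fun r _ => ?_
        rw [hCg, hCf]
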